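/- arXiv:1604.00052 — 2 statements merged into one kernel-verified Lean document; each statement's English description precedes it below -/
import Mathlib

section
/- Let b_i = (a_i^{(1)}, …, a_i^{(d)}), i = 1, …, r, be representatives such that for every pair i < j there exist three distinct indices k_1 < k_2 < k_3 in {1, …, d} with ⟨a_i^{(k_1)}, a_j^{(k_1)}⟩ = ⟨a_i^{(k_2)}, a_j^{(k_2)}⟩ = ⟨a_i^{(k_3)}, a_j^{(k_3)}⟩ = 0 (weak 3-orthogonality). Then the blocks of Terracini's matrix are pairwise orthogonal: T_i^H T_j = 0 for all i ≠ j, so the Gram matrix T_p^H T_p = diag(T_1^H T_1, …, T_r^H T_r) is block diagonal, and the multiset of singular values of T_p is the union of the multisets of singular values of T_1, …, T_r. -/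
open scoped BigOperators
open scoped Matrix

noncomputable section

namespace TensorCond

variable {𝕜 : Type*} [RCLike 𝕜]
variable {d r : ℕ} {n : Fin d → ℕ}

/-- The space `F^{r(Σ+d)}` of vectorized factor matrices: `r` blocks,
each consisting of `d` factors `a_i^{(k)} ∈ F^{n_k}`. -/
abbrev Vecr (𝕜 : Type*) (d r : ℕ) (n : Fin d → ℕ) : Type _ :=
  Fin r → (k : Fin d) → Fin (n k) → 𝕜

/-- The tensor space `F^{n₁} ⊗ ⋯ ⊗ F^{n_d} ≅ F^Π`. -/
abbrev Tensor (𝕜 : Type*) (d : ℕ) (n : Fin d → ℕ) : Type _ :=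
  ((k : Fin d) → Fin (n k)) → 𝕜

/-- Column index of Terracini's matrix. -/
abbrev ColIdx (d r : ℕ) (n : Fin d → ℕ) : Type _ :=
  Fin r × Σ k : Fin d, Fin (n k)

/-- The tensor computation map `f`. -/
def tmap (p : Vecr 𝕜 d r n) : Tensor 𝕜 d n :=
  fun x => ∑ i, ∏ k, p i k (x k)

/-- Terracini's matrix `T_p`. -/
def terracini (p : Vecr 𝕜 d r n) :
    Matrix ((k : Fin d) → Fin (n k)) (ColIdx d r n) 𝕜 :=
  Matrix.of fun x q =>
    (if x q.2.1 = q.2.2 then (1 : 𝕜) else 0) *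
      ∏ l ∈ Finset.univ.erase q.2.1, p q.1 l (x l)

/-- Flattening of a representative vector. -/
def flat (p : Vecr 𝕜 d r n) : ColIdx d r n → 𝕜 :=
  fun q => p q.1 q.2.1 q.2.2

/-- Flattening as a linear map. -/
def flatLM (𝕜 : Type*) [RCLike 𝕜] (d r : ℕ) (n : Fin d → ℕ) :
    Vecr 𝕜 d r n →ₗ[𝕜] (ColIdx d r n → 𝕜) where
  toFun := flat
  map_add' _ _ := rfl
  map_smul' _ _ := rfl

/-- Euclidean norm of a finitely supported vector. -/
def eunorm {ι : Type*} [Fintype ι] (v : ι → 𝕜) : ℝ :=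
  Real.sqrt (∑ i, ‖v i‖ ^ 2)

/-- Euclidean norm of one block. -/
def bnorm (b : (k : Fin d) → Fin (n k) → 𝕜) : ℝ :=
  Real.sqrt (∑ k, ∑ j, ‖b k j‖ ^ 2)

/-- Euclidean norm on `F^{r(Σ+d)}`. -/
def vnorm (p : Vecr 𝕜 d r n) : ℝ :=
  Real.sqrt (∑ i, ∑ k, ∑ j, ‖p i k j‖ ^ 2)

/-- Euclidean (Frobenius) norm on the tensor space. -/
def tnorm (A : Tensor 𝕜 d n) : ℝ :=
  Real.sqrt (∑ x, ‖A x‖ ^ 2)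

/-- Scaling part of the group `𝒯`. -/
def IsScaling (s : Fin r → Fin d → 𝕜) : Prop :=
  (∀ i k, s i k ≠ 0) ∧ ∀ i, ∏ k, s i k = 1

/-- Action of an element of `𝒯`. -/
def act (π : Equiv.Perm (Fin r)) (s : Fin r → Fin d → 𝕜) (q : Vecr 𝕜 d r n) :
    Vecr 𝕜 d r n :=
  fun i k j => s i k * q (π i) k j

/-- `p ∼ q`. -/
def rel (p q : Vecr 𝕜 d r n) : Prop :=
  ∃ (π : Equiv.Perm (Fin r)) (s : Fin r → Fin d → 𝕜), IsScaling s ∧ p = act π s q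

/-- The distance measure `d(p,q) = inf_{T ∈ 𝒯} ‖p − Tq‖`. -/
def gdist (p q : Vecr 𝕜 d r n) : ℝ :=
  sInf { x | ∃ (π : Equiv.Perm (Fin r)) (s : Fin r → Fin d → 𝕜),
    IsScaling s ∧ x = vnorm (p - act π s q) }

/-- Tensors of rank at most `r`. -/
def SecZ (𝕜 : Type*) [RCLike 𝕜] (d r : ℕ) (n : Fin d → ℕ) : Set (Tensor 𝕜 d n) :=
  Set.range (tmap (𝕜 := 𝕜) (d := d) (r := r) (n := n))

/-- `r`-identifiability. -/
def Identifiable {𝕜 : Type*} [RCLike 𝕜] {d : ℕ} {n : Fin d → ℕ} (r : ℕ)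
    (A : Tensor 𝕜 d n) : Prop :=
  ∀ x y : Vecr 𝕜 d r n, tmap x = A → tmap y = A → rel x y

/-- `d(p, f†(A))`. -/
def fdist (p : Vecr 𝕜 d r n) (A : Tensor 𝕜 d n) : ℝ :=
  sInf { x | ∃ q : Vecr 𝕜 d r n, tmap q = A ∧ x = gdist p q }

/-- Multiset of singular values of a matrix. -/
def singularValues {m l : Type*} [Fintype m] [Fintype l] [DecidableEq l]
    (M : Matrix m l 𝕜) : Multiset ℝ :=
  Multiset.map
    (fun i => Real.sqrt ((Matrix.isHermitian_conjTranspose_mul_self M).eigenvalues i))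
    Finset.univ.val

/-- `j`-th largest singular value (1-indexed). -/
def nthSV {m l : Type*} [Fintype m] [Fintype l] [DecidableEq l]
    (M : Matrix m l 𝕜) (j : ℕ) : ℝ :=
  (((singularValues M).sort (· ≤ ·)).reverse).getD (j - 1) 0

/-- Spectral norm. -/
def specNorm {m l : Type*} [Fintype m] [Fintype l] (M : Matrix m l 𝕜) : ℝ :=
  sSup { x | ∃ v : l → 𝕜, eunorm v = 1 ∧ x = eunorm (M.mulVec v) }

/-- Kernel vector `k_i^{(k)}` (one block). -/
def kvec [NeZero d] (p : Vecr 𝕜 d r n) (i : Fin r) (k : Fin d) :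
    (l : Fin d) → Fin (n l) → 𝕜 :=
  fun l j =>
    if h0 : l = 0 then p i 0 (h0 ▸ j)
    else if hk : l = k then -(p i k (hk ▸ j)) else 0

/-- Kernel basis vector `k_i^{(k)} ⊗ e_i` as a flattened column vector. -/
def kcol [NeZero d] (p : Vecr 𝕜 d r n) (i : Fin r) (k : Fin d) :
    ColIdx d r n → 𝕜 :=
  fun q => if q.1 = i then kvec p i k q.2.1 q.2.2 else 0

/-- `P ⊗ I_{Σ+d}` for a permutation `π`. -/
def permMx (𝕜 : Type*) [RCLike 𝕜] (d r : ℕ) (n : Fin d → ℕ)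
    (π : Equiv.Perm (Fin r)) : Matrix (ColIdx d r n) (ColIdx d r n) 𝕜 :=
  Matrix.of fun x y => if y.1 = π x.1 ∧ x.2 = y.2 then 1 else 0

/-- Block diagonal scaling matrix `diag(D_1, …, D_r)`. -/
def scalMx (s : Fin r → Fin d → 𝕜) : Matrix (ColIdx d r n) (ColIdx d r n) 𝕜 :=
  Matrix.diagonal fun x => s x.1 x.2.1

/-- The set `𝒯 = 𝒫ℬ` of matrices. -/
def Tset (𝕜 : Type*) [RCLike 𝕜] (d r : ℕ) (n : Fin d → ℕ) :
    Set (Matrix (ColIdx d r n) (ColIdx d r n) 𝕜) :=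
  { M | ∃ (π : Equiv.Perm (Fin r)) (s : Fin r → Fin d → 𝕜),
      IsScaling s ∧ M = permMx 𝕜 d r n π * scalMx s }

/-- The `i`-th block `T_i` of Terracini's matrix. -/
def terraciniBlock (p : Vecr 𝕜 d r n) (i : Fin r) :
    Matrix ((k : Fin d) → Fin (n k)) (Σ k : Fin d, Fin (n k)) 𝕜 :=
  Matrix.of fun x q =>
    (if x q.1 = q.2 then (1 : 𝕜) else 0) * ∏ l ∈ Finset.univ.erase q.1, p i l (x l)

/-- Kernel-basis matrix `K = [k^{(2)} ⋯ k^{(d)}]` (single point, r = 1). -/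
def Kmx [NeZero d] (a : (k : Fin d) → Fin (n k) → 𝕜) :
    Matrix (Σ k : Fin d, Fin (n k)) {k : Fin d // k ≠ 0} 𝕜 :=
  Matrix.of fun q j => kvec (fun _ : Fin 1 => a) 0 j.1 q.1 q.2


open Polynomial in
theorem charmatrix_diagonal' {N : Type*} [Fintype N] [DecidableEq N] {R : Type*} [CommRing R]
    (f : N → R) :
    Matrix.charmatrix (Matrix.diagonal f) = Matrix.diagonal fun i => X - C (f i) := by
  ext i j
  by_cases h : i = j
  · subst h; simp
  · simp [h, Matrix.diagonal_apply_ne _ h]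

open Polynomial in
theorem charpoly_diagonal' {N : Type*} [Fintype N] [DecidableEq N] {R : Type*} [CommRing R]
    (f : N → R) :
    (Matrix.diagonal f).charpoly = ∏ i, (X - C (f i)) := by
  rw [Matrix.charpoly, charmatrix_diagonal', Matrix.det_diagonal]

open Polynomial in
theorem charpoly_conj_unitary' {N : Type*} [Fintype N] [DecidableEq N] {R : Type*} [CommRing R]
    {U V : Matrix N N R} (hU : U * V = 1) (D : Matrix N N R) :
    (U * D * V).charpoly = D.charpoly := by
  let CM : Matrix N N R →+* Matrix N N R[X] := RingHom.mapMatrix (Polynomial.C : R →+* R[X])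
  have h1 : CM U * CM V = 1 := by rw [← map_mul, hU, map_one]
  have hc : Matrix.charmatrix (U * D * V) = CM U * Matrix.charmatrix D * CM V := by
    rw [Matrix.charmatrix, Matrix.charmatrix, mul_sub, sub_mul]
    congr 1
    · rw [(Matrix.scalar_commute (X : R[X]) (fun r => Commute.all _ _) (CM U)).symm.eq, mul_assoc, h1,
        mul_one]
    · simp only [CM, map_mul]
  rw [Matrix.charpoly, Matrix.charpoly, hc, Matrix.det_mul, Matrix.det_mul,
    mul_comm, ← mul_assoc, ← Matrix.det_mul, mul_eq_one_comm.mp h1, Matrix.det_one, one_mul]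

open Polynomial in
theorem roots_charpoly_isHermitian' {N : Type*} [Fintype N] [DecidableEq N]
    {A : Matrix N N 𝕜} (hA : A.IsHermitian) :
    A.charpoly.roots = Finset.univ.val.map fun i => ((hA.eigenvalues i : ℝ) : 𝕜) := by
  have hsp := hA.spectral_theorem
  have hU := Matrix.mem_unitaryGroup_iff.mp (hA.eigenvectorUnitary).2
  have : A.charpoly = ∏ i, (X - C ((hA.eigenvalues i : ℝ) : 𝕜)) := by
    conv_lhs => rw [hsp, Unitary.conjStarAlgAut_apply]
    rw [charpoly_conj_unitary' hU, charpoly_diagonal']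
    rfl
  rw [this]
  have := Polynomial.roots_multiset_prod_X_sub_C
    (Finset.univ.val.map fun i => ((hA.eigenvalues i : ℝ) : 𝕜))
  rw [← this, Multiset.map_map]
  rfl

open Polynomial in
theorem charmatrix_blockDiagonal' {ι N R : Type*} [Fintype ι] [DecidableEq ι]
    [Fintype N] [DecidableEq N] [CommRing R] (B : ι → Matrix N N R) :
    Matrix.charmatrix (Matrix.blockDiagonal B)
      = Matrix.blockDiagonal fun i => Matrix.charmatrix (B i) := by
  ext ⟨q, i⟩ ⟨q', j⟩
  by_cases h : i = j
  · subst h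
    by_cases hq : q = q'
    · subst hq; simp [Matrix.blockDiagonal_apply]
    · simp [Matrix.charmatrix_apply, Matrix.blockDiagonal_apply, hq,
        Matrix.diagonal_apply_ne _ (by simp [Prod.ext_iff, hq] : ((q,i) : N × ι) ≠ (q',i))]
  · simp [Matrix.charmatrix_apply, Matrix.blockDiagonal_apply, h,
      Matrix.diagonal_apply_ne _ (by simp [Prod.ext_iff, h] : ((q,i) : N × ι) ≠ (q',j))]

theorem charpoly_blockDiagonal' {ι N R : Type*} [Fintype ι] [DecidableEq ι]
    [Fintype N] [DecidableEq N] [CommRing R] (B : ι → Matrix N N R) :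
    (Matrix.blockDiagonal B).charpoly = ∏ i, (B i).charpoly := by
  rw [Matrix.charpoly, charmatrix_blockDiagonal', Matrix.det_blockDiagonal]
  rfl

theorem roots_prod_charpoly' {ι N : Type*} [Fintype ι] [DecidableEq ι]
    [Fintype N] [DecidableEq N] (B : ι → Matrix N N 𝕜) :
    (∏ i, (B i).charpoly).roots = ∑ i : ι, (B i).charpoly.roots := by
  rw [Polynomial.roots_prod _ _ (Finset.prod_ne_zero_iff.mpr
    fun i _ => (Matrix.charpoly_monic (B i)).ne_zero)]
  rw [Finset.sum]
  rfl

theorem map_multiset_finsum' {ι α β : Type*} [Fintype ι] (f : α → β) (m : ι → Multiset α) :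
    Multiset.map f (∑ i, m i) = ∑ i, Multiset.map f (m i) :=
  map_sum (Multiset.mapAddMonoidHom f) m Finset.univ

set_option maxHeartbeats 1000000 in
theorem block_orth_aux (p : Vecr 𝕜 d r n) {i j : Fin r}
    (h3 : ∃ k₁ k₂ k₃ : Fin d, k₁ ≠ k₂ ∧ k₁ ≠ k₃ ∧ k₂ ≠ k₃ ∧
        (∑ l, (starRingEnd 𝕜) (p i k₁ l) * p j k₁ l) = 0 ∧
        (∑ l, (starRingEnd 𝕜) (p i k₂ l) * p j k₂ l) = 0 ∧
        (∑ l, (starRingEnd 𝕜) (p i k₃ l) * p j k₃ l) = 0) :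
    (terraciniBlock p i)ᴴ * terraciniBlock p j = 0 := by
  classical
  obtain ⟨a1, a2, a3, h12, h13, h23, o1, o2, o3⟩ := h3
  ext ⟨k1, j1⟩ ⟨k2, j2⟩
  obtain ⟨l0, hl1, hl2, ho⟩ : ∃ l0 : Fin d, l0 ≠ k1 ∧ l0 ≠ k2 ∧
      (∑ m, (starRingEnd 𝕜) (p i l0 m) * p j l0 m) = 0 := by
    by_cases e1 : a1 ≠ k1 ∧ a1 ≠ k2
    · exact ⟨a1, e1.1, e1.2, o1⟩
    by_cases e2 : a2 ≠ k1 ∧ a2 ≠ k2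
    · exact ⟨a2, e2.1, e2.2, o2⟩
    by_cases e3 : a3 ≠ k1 ∧ a3 ≠ k2
    · exact ⟨a3, e3.1, e3.2, o3⟩
    · push_neg at e1 e2 e3
      exfalso
      by_cases f1 : a1 = k1
      · have g2 : a2 = k2 := e2 fun h => h12 (f1.trans h.symm)
        have g3 : a3 = k2 := e3 fun h => h13 (f1.trans h.symm)
        exact h23 (g2.trans g3.symm)
      · have g1 : a1 = k2 := e1 f1
        by_cases f2 : a2 = k1
        · have g3 : a3 = k2 := e3 fun h => h23 (f2.trans h.symm)
          exact h13 (g1.trans g3.symm)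
        · have g2 : a2 = k2 := e2 f2
          exact h12 (g1.trans g2.symm)
  set c1 : (l : Fin d) → Fin (n l) → 𝕜 := fun l m =>
    if l = k1 then (if (⟨l, m⟩ : Σ k : Fin d, Fin (n k)) = ⟨k1, j1⟩ then 1 else 0)
    else (starRingEnd 𝕜) (p i l m) with hc1def
  set c2 : (l : Fin d) → Fin (n l) → 𝕜 := fun l m =>
    if l = k2 then (if (⟨l, m⟩ : Σ k : Fin d, Fin (n k)) = ⟨k2, j2⟩ then 1 else 0)
    else p j l m with hc2def
  have hc1 : ∀ x : (k : Fin d) → Fin (n k), ∏ l, c1 l (x l)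
      = (starRingEnd 𝕜) ((if x k1 = j1 then (1:𝕜) else 0)
          * ∏ l ∈ Finset.univ.erase k1, p i l (x l)) := by
    intro x
    rw [map_mul, map_prod, ← Finset.mul_prod_erase Finset.univ
      (fun l => c1 l (x l)) (Finset.mem_univ k1)]
    congr 1
    · simp [hc1def, apply_ite (starRingEnd 𝕜)]
    · exact Finset.prod_congr rfl fun l hl => by
        simp [hc1def, (Finset.mem_erase.mp hl).1]
  have hc2 : ∀ x : (k : Fin d) → Fin (n k), ∏ l, c2 l (x l)
      = (if x k2 = j2 then (1:𝕜) else 0) * ∏ l ∈ Finset.univ.erase k2, p j l (x l) := by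
    intro x
    rw [← Finset.mul_prod_erase Finset.univ (fun l => c2 l (x l)) (Finset.mem_univ k2)]
    congr 1
    · simp [hc2def]
    · exact Finset.prod_congr rfl fun l hl => by
        simp [hc2def, (Finset.mem_erase.mp hl).1]
  have hmul : ((terraciniBlock p i)ᴴ * terraciniBlock p j) ⟨k1, j1⟩ ⟨k2, j2⟩
      = ∑ x : (k : Fin d) → Fin (n k), ∏ l, c1 l (x l) * c2 l (x l) := by
    rw [Matrix.mul_apply]
    refine Finset.sum_congr rfl fun x _ => ?_
    rw [Finset.prod_mul_distrib, hc1 x, hc2 x]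
    rfl
  have hfac : (∑ x : (k : Fin d) → Fin (n k), ∏ l, c1 l (x l) * c2 l (x l))
      = ∏ l, ∑ m, c1 l m * c2 l m := (Fintype.prod_sum (κ := fun l => Fin (n l)) fun l m => c1 l m * c2 l m).symm
  rw [Matrix.zero_apply, hmul, hfac]
  refine Finset.prod_eq_zero (Finset.mem_univ l0) ?_
  have : ∀ m, c1 l0 m * c2 l0 m = (starRingEnd 𝕜) (p i l0 m) * p j l0 m := by
    intro m
    simp [hc1def, hc2def, hl1, hl2]
  rw [Finset.sum_congr rfl fun m _ => this m]
  exact ho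

/-- under weak 3-orthogonality, the blocks of Terracini's matrix are
pairwise orthogonal (`Tᵢᴴ Tⱼ = 0` for `i ≠ j`), the Gram matrix `T_pᴴ T_p` is block
diagonal, and the multiset of singular values of `T_p` is the union of those of the
blocks `T₁, …, T_r`. -/
theorem weak3_gram_block_diagonal
    (hd : 3 ≤ d) (hn : ∀ k, 2 ≤ n k) (hr : 1 ≤ r)
    (p : Vecr 𝕜 d r n)
    (horth : ∀ i j : Fin r, i < j →
      ∃ k₁ k₂ k₃ : Fin d, k₁ < k₂ ∧ k₂ < k₃ ∧
        (∑ l, (starRingEnd 𝕜) (p i k₁ l) * p j k₁ l) = 0 ∧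
        (∑ l, (starRingEnd 𝕜) (p i k₂ l) * p j k₂ l) = 0 ∧
        (∑ l, (starRingEnd 𝕜) (p i k₃ l) * p j k₃ l) = 0) :
    (∀ i j : Fin r, i ≠ j → (terraciniBlock p i)ᴴ * terraciniBlock p j = 0)
    ∧ (terracini p)ᴴ * terracini p
        = Matrix.of (fun x y : ColIdx d r n =>
            if h : x.1 = y.1 then
              ((terraciniBlock p x.1)ᴴ * terraciniBlock p x.1) x.2 y.2
            else 0)
    ∧ singularValues (terracini p) = ∑ i : Fin r, singularValues (terraciniBlock p i) := by
  classical
  have horth' : ∀ i j : Fin r, i ≠ j →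
      ∃ k₁ k₂ k₃ : Fin d, k₁ ≠ k₂ ∧ k₁ ≠ k₃ ∧ k₂ ≠ k₃ ∧
        (∑ l, (starRingEnd 𝕜) (p i k₁ l) * p j k₁ l) = 0 ∧
        (∑ l, (starRingEnd 𝕜) (p i k₂ l) * p j k₂ l) = 0 ∧
        (∑ l, (starRingEnd 𝕜) (p i k₃ l) * p j k₃ l) = 0 := by
    have conjtrick : ∀ (i j : Fin r) (k : Fin d),
        (∑ l, (starRingEnd 𝕜) (p j k l) * p i k l) = 0 →
        (∑ l, (starRingEnd 𝕜) (p i k l) * p j k l) = 0 := by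
      intro i j k o
      have h := congrArg (starRingEnd 𝕜) o
      rw [map_sum, map_zero] at h
      rw [← h]
      exact Finset.sum_congr rfl fun l _ => by
        rw [map_mul, RCLike.conj_conj]; ring
    intro i j hij
    rcases hij.lt_or_gt with h | h
    · obtain ⟨k1, k2, k3, h12, h23, o1, o2, o3⟩ := horth i j h
      exact ⟨k1, k2, k3, h12.ne, (h12.trans h23).ne, h23.ne, o1, o2, o3⟩
    · obtain ⟨k1, k2, k3, h12, h23, o1, o2, o3⟩ := horth j i h
      exact ⟨k1, k2, k3, h12.ne, (h12.trans h23).ne, h23.ne,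
        conjtrick i j k1 o1, conjtrick i j k2 o2, conjtrick i j k3 o3⟩
  have part1 : ∀ i j : Fin r, i ≠ j →
      (terraciniBlock p i)ᴴ * terraciniBlock p j = 0 :=
    fun i j hij => block_orth_aux p (horth' i j hij)
  have hent : ∀ x y : ColIdx d r n, ((terracini p)ᴴ * terracini p) x y
      = ((terraciniBlock p x.1)ᴴ * terraciniBlock p y.1) x.2 y.2 := by
    intro x y
    rw [Matrix.mul_apply, Matrix.mul_apply]
    rfl
  have part2 : (terracini p)ᴴ * terracini p
      = Matrix.of (fun x y : ColIdx d r n =>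
          if h : x.1 = y.1 then
            ((terraciniBlock p x.1)ᴴ * terraciniBlock p x.1) x.2 y.2
          else 0) := by
    ext x y
    rw [Matrix.of_apply, hent]
    by_cases h : x.1 = y.1
    · rw [dif_pos h, h]
    · rw [dif_neg h, part1 x.1 y.1 h, Matrix.zero_apply]
  refine ⟨part1, part2, ?_⟩
  have hG := Matrix.isHermitian_conjTranspose_mul_self (terracini p)
  have hB : ∀ i : Fin r, ((terraciniBlock p i)ᴴ * terraciniBlock p i).IsHermitian :=
    fun i => Matrix.isHermitian_conjTranspose_mul_self _
  have hGeq : (terracini p)ᴴ * terracini p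
      = Matrix.reindex (Equiv.prodComm _ _) (Equiv.prodComm _ _)
          (Matrix.blockDiagonal fun i => (terraciniBlock p i)ᴴ * terraciniBlock p i) := by
    rw [part2]
    ext x y
    rw [Matrix.of_apply, Matrix.reindex_apply, Matrix.submatrix_apply]
    by_cases h : x.1 = y.1 <;> simp [Matrix.blockDiagonal_apply, h]
  have hchar : ((terracini p)ᴴ * terracini p).charpoly
      = ∏ i, ((terraciniBlock p i)ᴴ * terraciniBlock p i).charpoly := by
    rw [hGeq, Matrix.charpoly_reindex, charpoly_blockDiagonal']
  have l1 : Multiset.map (fun x : ℝ => (x : 𝕜)) (Finset.univ.val.map hG.eigenvalues)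
      = ((terracini p)ᴴ * terracini p).charpoly.roots := by
    rw [Multiset.map_map, roots_charpoly_isHermitian' hG]; rfl
  have l2 : ∀ i : Fin r, Multiset.map (fun x : ℝ => (x : 𝕜))
        (Finset.univ.val.map (hB i).eigenvalues)
      = ((terraciniBlock p i)ᴴ * terraciniBlock p i).charpoly.roots := fun i => by
    rw [Multiset.map_map, roots_charpoly_isHermitian' (hB i)]; rfl
  have key : (Finset.univ.val.map hG.eigenvalues)
      = ∑ i : Fin r, Finset.univ.val.map (hB i).eigenvalues := by
    apply Multiset.map_injective (RCLike.ofReal_injective (K := 𝕜))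
    rw [map_multiset_finsum', l1, hchar, roots_prod_charpoly']
    exact Finset.sum_congr rfl fun i _ => (l2 i).symm
  calc singularValues (terracini p)
      = Multiset.map Real.sqrt (Finset.univ.val.map hG.eigenvalues) := by
        rw [Multiset.map_map]; rfl
    _ = ∑ i : Fin r, Multiset.map Real.sqrt (Finset.univ.val.map (hB i).eigenvalues) := by
        rw [key, map_multiset_finsum']
    _ = ∑ i : Fin r, singularValues (terraciniBlock p i) :=
        Finset.sum_congr rfl fun i _ => by rw [Multiset.map_map]; rfl

end TensorCond
end
end

section
/- The relative condition number of robustly r-identifiable tensors is bounded below by d^{-1}: if p ∈ F^{r(Σ+d)} is a nonzero norm-balanced representative vector (i.e., within each block b_i = (a_i^{(1)}, …, a_i^{(d)}) all factor norms ‖a_i^{(1)}‖ = ⋯ = ‖a_i^{(d)}‖ are equal) and Terracini's matrix T_p has rank N = r(Σ+1), then ς_N(T_p)^{-1} · ‖f(p)‖ / ‖p‖ ≥ 1/d. -/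
open scoped BigOperators
open scoped Matrix

noncomputable section

namespace TensorCond

variable {𝕜 : Type*} [RCLike 𝕜]
variable {d r : ℕ} {n : Fin d → ℕ}

/-! ### Auxiliary lemmas -/

section Aux

open Finset in
lemma sorted_nth_largest (L : List ℝ) (hL : L.Pairwise (· ≤ ·)) (h0 : ∀ x ∈ L, 0 ≤ x)
    (N : ℕ) (hN1 : 1 ≤ N) (hNle : N ≤ L.length)
    (hcount : L.countP (fun x => decide (0 < x)) = N) :
    0 < L.reverse.getD (N-1) 0 ∧ ∀ x ∈ L, 0 < x → L.reverse.getD (N-1) 0 ≤ x := by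
  set k := L.length - N with hk
  have hkl : k < L.length := by omega
  have hrev : L.reverse.getD (N-1) 0 = L[k] := by
    have h1 : N - 1 < L.reverse.length := by simp; omega
    rw [List.getD_eq_getElem _ _ h1, List.getElem_reverse]
    congr 1
    omega
  rw [hrev]
  have hsplit : L = L.take k ++ L.drop k := (List.take_append_drop k L).symm
  have hpw := List.pairwise_append.mp (hsplit ▸ hL)
  have hdropsorted : (L.drop k).Pairwise (· ≤ ·) := hpw.2.1
  have hdropeq : L.drop k = L[k] :: L.drop (k+1) := List.drop_eq_getElem_cons hkl
  have htakedrop : ∀ x ∈ L.take k, ∀ y ∈ L.drop k, x ≤ y := hpw.2.2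
  have hcount' : (L.take k).countP (fun x => decide (0 < x)) +
      (L.drop k).countP (fun x => decide (0 < x)) = N := by
    rw [← List.countP_append, ← hsplit, hcount]
  have hlendrop : (L.drop k).length = N := by simp; omega
  have hmemk : L[k] ∈ L.drop k := by rw [hdropeq]; exact List.mem_cons_self
  constructor
  · by_contra hle
    push_neg at hle
    have hzero : L[k] = 0 := le_antisymm hle (h0 _ (List.getElem_mem hkl))
    have htake0 : (L.take k).countP (fun x => decide (0 < x)) = 0 := by
      rw [List.countP_eq_zero]
      intro x hx
      have := htakedrop x hx _ hmemk
      simp only [decide_eq_true_eq]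
      push_neg
      linarith [hzero ▸ this]
    have hdrople : (L.drop k).countP (fun x => decide (0 < x)) ≤ N - 1 := by
      rw [hdropeq]
      rw [List.countP_cons]
      have : (L.drop (k+1)).countP (fun x => decide (0 < x)) ≤ L.length - (k+1) := by
        calc (L.drop (k+1)).countP (fun x => decide (0 < x)) ≤ (L.drop (k+1)).length :=
              List.countP_le_length
          _ = L.length - (k+1) := by simp
      simp only [hzero]
      norm_num
      omega
    omega
  · intro x hx hxpos
    by_contra hlt
    push_neg at hlt
    have hdropge : ∀ y ∈ L.drop k, L[k] ≤ y := by
      rw [hdropeq]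
      intro y hy
      rcases List.mem_cons.mp hy with h | h
      · exact le_of_eq h.symm
      · exact (List.pairwise_cons.mp (hdropeq ▸ hdropsorted)).1 y h
    have hxtake : x ∈ L.take k := by
      rcases List.mem_append.mp (hsplit ▸ hx) with h | h
      · exact h
      · exact absurd (hdropge x h) (by linarith)
    have htakepos : 1 ≤ (L.take k).countP (fun x => decide (0 < x)) := by
      rw [Nat.one_le_iff_ne_zero]
      intro hzero
      rw [List.countP_eq_zero] at hzero
      exact absurd hxpos (by simpa using hzero x hxtake)
    have hdropfull : (L.drop k).countP (fun x => decide (0 < x)) = N := by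
      rw [List.countP_eq_length.mpr, hlendrop]
      intro y hy
      simp only [decide_eq_true_eq]
      have := hdropge y hy
      linarith
    omega

open scoped ComplexOrder in
lemma nthSV_facts {m l : Type*} [Fintype m] [Fintype l] [DecidableEq l]
    (M : Matrix m l 𝕜) (N : ℕ) (hrank : M.rank = N) (hN1 : 1 ≤ N) :
    0 < nthSV M N ∧ ∀ i, (Matrix.isHermitian_conjTranspose_mul_self M).eigenvalues i ≠ 0 →
      nthSV M N ≤ Real.sqrt ((Matrix.isHermitian_conjTranspose_mul_self M).eigenvalues i) := by
  set hA := Matrix.isHermitian_conjTranspose_mul_self M with hAdef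
  have hnonneg : ∀ i, 0 ≤ hA.eigenvalues i := fun i =>
    Matrix.eigenvalues_conjTranspose_mul_self_nonneg M i
  set L := (singularValues M).sort (· ≤ ·) with hLdef
  have hsorted : L.Pairwise (· ≤ ·) := Multiset.pairwise_sort _ _
  have hmem : ∀ x ∈ L, 0 ≤ x := by
    intro x hx
    rw [Multiset.mem_sort] at hx
    obtain ⟨i, _, rfl⟩ := Multiset.mem_map.mp hx
    exact Real.sqrt_nonneg _
  have hlen : L.length = Fintype.card l := by
    rw [hLdef, Multiset.length_sort, singularValues, Multiset.card_map,
      ← Finset.card_def, Finset.card_univ]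
  have hcount : L.countP (fun x => decide (0 < x)) = N := by
    have h1 : List.countP (fun x => decide (0 < x)) L
        = Multiset.countP (fun x => (0:ℝ) < x) (singularValues M) := by
      conv_rhs => rw [← Multiset.sort_eq (singularValues M) (· ≤ ·)]
      rw [Multiset.coe_countP]
    rw [h1, singularValues, Multiset.countP_map, ← Finset.filter_val, ← Finset.card_def]
    have h2 : (Finset.univ.filter fun i => 0 < Real.sqrt (hA.eigenvalues i))
        = Finset.univ.filter fun i => hA.eigenvalues i ≠ 0 := by
      apply Finset.filter_congr
      intro i _
      rw [Real.sqrt_pos]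
      constructor
      · intro h; exact ne_of_gt h
      · intro h; exact lt_of_le_of_ne (hnonneg i) (Ne.symm h)
    rw [h2, ← Fintype.card_subtype, ← hA.rank_eq_card_non_zero_eigs,
      Matrix.rank_conjTranspose_mul_self, hrank]
  have hNle : N ≤ L.length := by
    rw [hlen, ← hrank]
    exact M.rank_le_card_width
  have := sorted_nth_largest L hsorted hmem N hN1 hNle hcount
  constructor
  · exact this.1
  · intro i hi
    apply this.2
    · rw [hLdef, Multiset.mem_sort]
      exact Multiset.mem_map.mpr ⟨i, Finset.mem_univ_val _, rfl⟩
    · rw [Real.sqrt_pos]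
      exact lt_of_le_of_ne (hnonneg i) (Ne.symm hi)

open scoped ComplexOrder in
lemma key_lower_bound {m l : Type*} [Fintype m] [Fintype l] [DecidableEq l]
    (M : Matrix m l 𝕜) (N : ℕ) (hrank : M.rank = N) (hN1 : 1 ≤ N) (v : l → 𝕜)
    (hv : ∀ w : l → 𝕜, M.mulVec w = 0 → ∑ q, (starRingEnd 𝕜) (w q) * v q = 0) :
    nthSV M N * eunorm v ≤ eunorm (M.mulVec v) := by
  obtain ⟨ht, hle⟩ := nthSV_facts M N hrank hN1
  set hA := Matrix.isHermitian_conjTranspose_mul_self M with hAdef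
  set μ : l → ℝ := hA.eigenvalues with hμ
  have hnonneg : ∀ i, 0 ≤ μ i := fun i => Matrix.eigenvalues_conjTranspose_mul_self_nonneg M i
  set U : Matrix l l 𝕜 := (hA.eigenvectorUnitary : Matrix l l 𝕜) with hU
  have hUU : U * Uᴴ = 1 := by
    rw [← Matrix.star_eq_conjTranspose]
    exact Unitary.mul_star_self_of_mem hA.eigenvectorUnitary.2
  set y : l → 𝕜 := Uᴴ.mulVec v with hy
  have hstary : star y = Matrix.vecMul (star v) U := by
    rw [hy, Matrix.star_mulVec, Matrix.conjTranspose_conjTranspose]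
  have hyv : ∑ i, ‖y i‖ ^ 2 = ∑ q, ‖v q‖ ^ 2 := by
    have h1 : dotProduct (star y) y = dotProduct (star v) v := by
      rw [hstary, ← Matrix.dotProduct_mulVec, Matrix.mulVec_mulVec, hUU, Matrix.one_mulVec]
    have h2 : (↑(∑ i, ‖y i‖ ^ 2) : 𝕜) = ↑(∑ q, ‖v q‖ ^ 2) := by
      push_cast
      simpa [dotProduct, RCLike.conj_mul] using h1
    exact_mod_cast h2
  have hquad : ∑ j, ‖M.mulVec v j‖ ^ 2 = ∑ i, μ i * ‖y i‖ ^ 2 := by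
    have h1 : dotProduct (star v) ((Mᴴ * M).mulVec v)
        = dotProduct (star (M.mulVec v)) (M.mulVec v) := by
      rw [← Matrix.mulVec_mulVec, Matrix.dotProduct_mulVec, Matrix.star_mulVec]
    have h2 : dotProduct (star v) ((Mᴴ * M).mulVec v)
        = ∑ i, (μ i : 𝕜) * ‖y i‖ ^ 2 := by
      conv_lhs => rw [hA.spectral_theorem, Unitary.conjStarAlgAut_apply]
      rw [Matrix.star_eq_conjTranspose, ← hU,
        ← Matrix.mulVec_mulVec, ← Matrix.mulVec_mulVec, Matrix.dotProduct_mulVec, ← hstary, ← hy]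
      rw [dotProduct]
      apply Finset.sum_congr rfl
      intro i _
      rw [Matrix.mulVec_diagonal]
      have hc : star (y i) * y i = (‖y i‖ : 𝕜) ^ 2 := RCLike.conj_mul (y i)
      calc star (y i) * ((μ i : 𝕜) * y i) = (μ i : 𝕜) * (star (y i) * y i) := by ring
        _ = (μ i : 𝕜) * (‖y i‖:𝕜) ^ 2 := by rw [hc]
    have h3 : (↑(∑ j, ‖M.mulVec v j‖ ^ 2) : 𝕜) = ↑(∑ i, μ i * ‖y i‖ ^ 2) := by
      push_cast
      rw [← h2, h1]
      simp [dotProduct, RCLike.conj_mul]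
    exact_mod_cast h3
  have hzero : ∀ i, μ i = 0 → y i = 0 := by
    intro i hi
    have hcol : M.mulVec (fun q => U q i) = 0 := by
      have h1 : (Mᴴ * M).mulVec (fun q => U q i) = 0 := by
        have : (fun q => U q i) = ⇑(hA.eigenvectorBasis i) := by
          funext q; exact hA.eigenvectorUnitary_apply q i
        rw [this, hA.mulVec_eigenvectorBasis, ← hμ, hi]
        simp
      exact (Matrix.conjTranspose_mul_self_mulVec_eq_zero M _).mp h1
    have := hv _ hcol
    rw [hy]
    simpa [Matrix.mulVec, dotProduct, Matrix.conjTranspose_apply] using this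
  have hmain : (nthSV M N) ^ 2 * ∑ q, ‖v q‖ ^ 2 ≤ ∑ j, ‖M.mulVec v j‖ ^ 2 := by
    rw [hquad, ← hyv, Finset.mul_sum]
    apply Finset.sum_le_sum
    intro i _
    by_cases hi : μ i = 0
    · rw [hzero i hi]
      simp
    · have h1 : nthSV M N ≤ Real.sqrt (μ i) := hle i hi
      have h2 : (nthSV M N)^2 ≤ μ i := by
        calc (nthSV M N)^2 ≤ Real.sqrt (μ i) ^ 2 := pow_le_pow_left₀ (le_of_lt ht) h1 2
          _ = μ i := Real.sq_sqrt (hnonneg i)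
      exact mul_le_mul_of_nonneg_right h2 (by positivity)
  rw [eunorm, eunorm]
  calc nthSV M N * Real.sqrt (∑ i, ‖v i‖ ^ 2)
      = Real.sqrt ((nthSV M N)^2 * ∑ i, ‖v i‖ ^ 2) := by
        rw [Real.sqrt_mul (by positivity), Real.sqrt_sq (le_of_lt ht)]
    _ ≤ Real.sqrt (∑ j, ‖M.mulVec v j‖ ^ 2) := Real.sqrt_le_sqrt hmain

lemma eunorm_sq {ι : Type*} [Fintype ι] (v : ι → 𝕜) : eunorm v ^ 2 = ∑ i, ‖v i‖ ^ 2 := by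
  rw [eunorm, Real.sq_sqrt (by positivity)]

lemma eunorm_eq_zero_iff {ι : Type*} [Fintype ι] (v : ι → 𝕜) : eunorm v = 0 ↔ v = 0 := by
  rw [eunorm, Real.sqrt_eq_zero (by positivity)]
  rw [Finset.sum_eq_zero_iff_of_nonneg (fun i _ => by positivity)]
  constructor
  · intro h
    funext i
    have := h i (Finset.mem_univ i)
    simpa using this
  · intro h i _
    rw [h]
    simp

lemma sum_conj_mul_self {ι : Type*} [Fintype ι] (v : ι → 𝕜) :
    ∑ j, (starRingEnd 𝕜) (v j) * v j = ((∑ j, ‖v j‖ ^ 2 : ℝ) : 𝕜) := by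
  push_cast
  exact Finset.sum_congr rfl fun j _ => RCLike.conj_mul (v j)

lemma sum_sq_eq_of_eunorm_eq {ι κ : Type*} [Fintype ι] [Fintype κ] {u : ι → 𝕜} {v : κ → 𝕜}
    (h : eunorm u = eunorm v) :
    ∑ j, ‖u j‖ ^ 2 = ∑ j, ‖v j‖ ^ 2 := by
  rw [← eunorm_sq, ← eunorm_sq, h]

lemma finrank_iSup_le_sum {V : Type*} [AddCommGroup V] [Module 𝕜 V] [FiniteDimensional 𝕜 V]
    {ι : Type*} [Fintype ι] (W : ι → Submodule 𝕜 V) :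
    Module.finrank 𝕜 ↥(⨆ i, W i) ≤ ∑ i, Module.finrank 𝕜 ↥(W i) := by
  classical
  have H : ∀ s : Finset ι, Module.finrank 𝕜 ↥(s.sup W) ≤ ∑ i ∈ s, Module.finrank 𝕜 ↥(W i) := by
    intro s
    induction s using Finset.cons_induction with
    | empty => simp
    | cons a s ha ih =>
      rw [Finset.sup_cons, Finset.sum_cons]
      have h2 := Submodule.finrank_sup_add_finrank_inf_eq (W a) (s.sup W)
      omega
  have h1 : (⨆ i, W i) = Finset.univ.sup W := by
    rw [Finset.sup_eq_iSup]
    simp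
  rw [h1]
  simpa using H Finset.univ

end Aux

section Main

variable [NeZero d]

set_option linter.unusedSectionVars false

lemma sum_sigma_univ {β : Type*} [AddCommMonoid β] (f : (Σ k : Fin d, Fin (n k)) → β) :
    ∑ σ : Σ k : Fin d, Fin (n k), f σ = ∑ k, ∑ j, f ⟨k, j⟩ := by
  rw [← Finset.univ_sigma_univ, Finset.sum_sigma]

lemma terracini_apply (p : Vecr 𝕜 d r n) (x : (k : Fin d) → Fin (n k))
    (q : ColIdx d r n) :
    terracini p x q = (if x q.2.1 = q.2.2 then (1 : 𝕜) else 0) *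
      ∏ l ∈ Finset.univ.erase q.2.1, p q.1 l (x l) := rfl

lemma terraciniBlock_apply (p : Vecr 𝕜 d r n) (i : Fin r) (x : (k : Fin d) → Fin (n k))
    (q : Σ k : Fin d, Fin (n k)) :
    terraciniBlock p i x q = (if x q.1 = q.2 then (1 : 𝕜) else 0) *
      ∏ l ∈ Finset.univ.erase q.1, p i l (x l) := rfl

lemma collapse_sum (C : 𝕜) (k : Fin d) (x : (k : Fin d) → Fin (n k)) (g : Fin (n k) → 𝕜) :
    ∑ j, (if x k = j then (1:𝕜) else 0) * C * g j = C * g (x k) := by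
  rw [Finset.sum_congr rfl (fun j _ => by
    rw [ite_mul, ite_mul, zero_mul, zero_mul, one_mul] : ∀ j ∈ Finset.univ,
      (if x k = j then (1:𝕜) else 0) * C * g j = if x k = j then C * g j else 0)]
  rw [Finset.sum_ite_eq]
  simp

lemma terracini_mulVec_flat (p : Vecr 𝕜 d r n) :
    (terracini p).mulVec (flat p) = fun x => (d : 𝕜) * tmap p x := by
  funext x
  rw [Matrix.mulVec, dotProduct, Fintype.sum_prod_type]
  have hin : ∀ i : Fin r, ∑ σ : Σ k : Fin d, Fin (n k), terracini p x (i, σ) * flat p (i, σ)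
      = (d : 𝕜) * ∏ l, p i l (x l) := by
    intro i
    rw [sum_sigma_univ]
    have h1 : ∀ k : Fin d, ∑ j : Fin (n k),
        terracini p x (i, ⟨k, j⟩) * flat p (i, ⟨k, j⟩) = ∏ l, p i l (x l) := by
      intro k
      have h2 : ∀ j : Fin (n k), terracini p x (i, ⟨k, j⟩) * flat p (i, ⟨k, j⟩)
          = (if x k = j then (1:𝕜) else 0) * (∏ l ∈ Finset.univ.erase k, p i l (x l)) *
            p i k j := fun _ => rfl
      rw [Finset.sum_congr rfl (fun j _ => h2 j), collapse_sum]
      exact Finset.prod_erase_mul _ _ (Finset.mem_univ k)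
    rw [Finset.sum_congr rfl (fun k _ => h1 k), Finset.sum_const]
    simp [mul_comm]
  rw [Finset.sum_congr rfl (fun i _ => hin i), ← Finset.mul_sum]
  rfl

lemma kvec_transport (p : Vecr 𝕜 d r n) (i : Fin r) (k : Fin d) (hk : k ≠ 0)
    (j : Fin (n k)) : kvec p i k k j = -(p i k j) := by
  simp [kvec, hk]

lemma kvec_other (p : Vecr 𝕜 d r n) (i : Fin r) (k k' : Fin d) (hk0 : k' ≠ 0)
    (hkk : k' ≠ k) (j : Fin (n k')) : kvec p i k k' j = 0 := by
  simp [kvec, hk0, hkk]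

lemma kcol_apply_same (p : Vecr 𝕜 d r n) (i : Fin r) (k : Fin d) (hk : k ≠ 0)
    (j : Fin (n k)) : kcol p i k (i, ⟨k, j⟩) = -(p i k j) := by
  show (if i = i then kvec p i k k j else 0) = _
  rw [if_pos rfl]
  exact kvec_transport p i k hk j

lemma terraciniBlock_mulVec_kvec (p : Vecr 𝕜 d r n) (i : Fin r) (k : Fin d)
    (hk : k ≠ 0) :
    (terraciniBlock p i).mulVec (fun q : Σ k' : Fin d, Fin (n k') => kvec p i k q.1 q.2) = 0 := by
  funext x
  rw [Matrix.mulVec, dotProduct, sum_sigma_univ]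
  set P := ∏ l, p i l (x l) with hP
  have h1 : ∀ k' : Fin d, ∑ j : Fin (n k'),
      terraciniBlock p i x ⟨k', j⟩ * kvec p i k k' j
      = (if k' = 0 then P else 0) + (if k' = k then -P else 0) := by
    intro k'
    have h2 : ∀ j : Fin (n k'), terraciniBlock p i x ⟨k', j⟩ * kvec p i k k' j
        = (if x k' = j then (1:𝕜) else 0) * (∏ l ∈ Finset.univ.erase k', p i l (x l)) *
          kvec p i k k' j := fun _ => rfl
    rw [Finset.sum_congr rfl (fun j _ => h2 j), collapse_sum]
    rcases eq_or_ne k' 0 with h0 | h0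
    · subst h0
      rw [if_pos rfl, if_neg (Ne.symm hk)]
      have : kvec p i k 0 (x 0) = p i 0 (x 0) := by simp [kvec]
      rw [this, add_zero, hP]
      exact Finset.prod_erase_mul _ _ (Finset.mem_univ 0)
    · rcases eq_or_ne k' k with hkk | hkk
      · subst hkk
        rw [if_neg h0, if_pos rfl, zero_add]
        rw [kvec_transport p i k' h0 (x k'), mul_neg, hP, neg_inj]
        exact Finset.prod_erase_mul _ _ (Finset.mem_univ k')
      · rw [if_neg h0, if_neg hkk]
        rw [kvec_other p i k k' h0 hkk (x k'), mul_zero, add_zero]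
  rw [Finset.sum_congr rfl (fun k' _ => h1 k'), Finset.sum_add_distrib,
    Finset.sum_ite_eq' Finset.univ (0 : Fin d) (fun _ => P),
    Finset.sum_ite_eq' Finset.univ k (fun _ => -P)]
  simp

lemma terracini_mulVec_blockSupported (p : Vecr 𝕜 d r n) (i : Fin r)
    (u : (Σ k : Fin d, Fin (n k)) → 𝕜) :
    (terracini p).mulVec (fun q : ColIdx d r n => if q.1 = i then u q.2 else 0)
      = (terraciniBlock p i).mulVec u := by
  funext x
  rw [Matrix.mulVec, dotProduct, Fintype.sum_prod_type, Matrix.mulVec, dotProduct]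
  have hsum : ∀ i' : Fin r,
      (∑ σ : Σ k : Fin d, Fin (n k), terracini p x (i', σ) * (if i' = i then u σ else 0))
      = if i' = i then ∑ σ : Σ k : Fin d, Fin (n k), terraciniBlock p i x σ * u σ else 0 := by
    intro i'
    by_cases h : i' = i
    · subst h
      simp only [if_pos rfl]
      rfl
    · simp [h]
  rw [Finset.sum_congr rfl (fun i' _ => hsum i'), Finset.sum_ite_eq' Finset.univ i]
  simp

lemma kcol_mem_ker (p : Vecr 𝕜 d r n) (i : Fin r) (k : Fin d) (hk : k ≠ 0) :
    (terracini p).mulVec (kcol p i k) = 0 := by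
  have h2 := terracini_mulVec_blockSupported p i (fun σ : Σ k' : Fin d, Fin (n k') =>
    kvec p i k σ.1 σ.2)
  rw [terraciniBlock_mulVec_kvec p i k hk] at h2
  exact h2

lemma terraciniBlock_eq_zero (hd : 2 ≤ d) (p : Vecr 𝕜 d r n) (i : Fin r)
    (h : ∀ k, p i k = 0) : terraciniBlock p i = 0 := by
  ext x σ
  rw [terraciniBlock_apply]
  have hne : (Finset.univ.erase σ.1).Nonempty := by
    rw [← Finset.card_pos, Finset.card_erase_of_mem (Finset.mem_univ _)]
    simp only [Finset.card_univ, Fintype.card_fin]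
    omega
  obtain ⟨l, hl⟩ := hne
  rw [Finset.prod_eq_zero hl (by rw [h l]; rfl), mul_zero]
  rfl

lemma kvec_indep (p : Vecr 𝕜 d r n) (i : Fin r) (hnz : ∀ k, p i k ≠ 0) :
    LinearIndependent 𝕜 (fun (k : {k : Fin d // k ≠ 0}) =>
      (fun q : Σ k' : Fin d, Fin (n k') => kvec p i k.1 q.1 q.2)) := by
  rw [Fintype.linearIndependent_iff]
  intro c hc k
  obtain ⟨j, hj⟩ := Function.ne_iff.mp (hnz k.1)
  have := congrFun hc ⟨k.1, j⟩
  simp only [Finset.sum_apply, Pi.smul_apply, smul_eq_mul, Pi.zero_apply] at this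
  rw [Finset.sum_eq_single k] at this
  · rw [kvec_transport p i k.1 k.2 j] at this
    have : c k * p i k.1 j = 0 := by linear_combination -this
    rcases mul_eq_zero.mp this with h | h
    · exact h
    · exact absurd h hj
  · intro k' _ hk'
    rw [kvec_other p i k'.1 k.1 k.2 (fun h => hk' (Subtype.ext h).symm) j, mul_zero]
  · intro h
    exact absurd (Finset.mem_univ k) h

lemma kcol_indep (p : Vecr 𝕜 d r n) (hnz : ∀ i k, p i k ≠ 0) :
    LinearIndependent 𝕜 (fun (z : Fin r × {k : Fin d // k ≠ 0}) => kcol p z.1 z.2.1) := by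
  rw [Fintype.linearIndependent_iff]
  intro c hc z
  obtain ⟨i, k⟩ := z
  obtain ⟨j, hj⟩ := Function.ne_iff.mp (hnz i k.1)
  have := congrFun hc (i, ⟨k.1, j⟩)
  simp only [Finset.sum_apply, Pi.smul_apply, smul_eq_mul, Pi.zero_apply] at this
  rw [Finset.sum_eq_single (i, k)] at this
  · rw [kcol_apply_same p i k.1 k.2 j] at this
    have h2 : c (i, k) * p i k.1 j = 0 := by linear_combination -this
    rcases mul_eq_zero.mp h2 with h | h
    · exact h
    · exact absurd h hj
  · rintro ⟨i', k'⟩ _ hne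
    simp only [kcol]
    by_cases hii : i = i'
    · subst hii
      have hkk : k' ≠ k := fun h => hne (by rw [h])
      rw [if_pos rfl, kvec_other p i k'.1 k.1 k.2
        (fun h => hkk (Subtype.ext h.symm)) j, mul_zero]
    · rw [if_neg hii, mul_zero]
  · intro h
    exact absurd (Finset.mem_univ _) h

lemma card_ne_zero_subtype : Fintype.card {k : Fin d // k ≠ 0} = d - 1 := by
  have h1 : Fintype.card {k : Fin d // k ≠ 0} = Fintype.card (Fin d) -
      Fintype.card {k : Fin d // k = 0} := Fintype.card_subtype_compl _
  rw [h1, Fintype.card_subtype_eq (0 : Fin d), Fintype.card_fin]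

lemma terraciniBlock_rank_le (hd : 2 ≤ d) (hn : ∀ k, 2 ≤ n k) (p : Vecr 𝕜 d r n) (i : Fin r)
    (hbal : ∀ k k', eunorm (p i k) = eunorm (p i k')) :
    (terraciniBlock p i).rank ≤ (∑ k, (n k - 1)) + 1 := by
  by_cases hz : ∃ k, p i k = 0
  · obtain ⟨k0, hk0⟩ := hz
    have hall : ∀ k, p i k = 0 := by
      intro k
      have h1 : eunorm (p i k) = 0 := by
        rw [hbal k k0, hk0]
        exact (eunorm_eq_zero_iff _).mpr rfl
      exact (eunorm_eq_zero_iff _).mp h1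
    rw [terraciniBlock_eq_zero hd p i hall, Matrix.rank_zero]
    omega
  · push_neg at hz
    set T := terraciniBlock p i with hT
    have hrn : T.rank + Module.finrank 𝕜 ↥(LinearMap.ker T.mulVecLin)
        = Fintype.card (Σ k : Fin d, Fin (n k)) := by
      have := LinearMap.finrank_range_add_finrank_ker T.mulVecLin
      rw [Matrix.rank]
      rw [this, Module.finrank_fintype_fun_eq_card]
    have hcard : Fintype.card (Σ k : Fin d, Fin (n k)) = (∑ k, (n k - 1)) + d := by
      rw [Fintype.card_sigma]
      have : ∀ k : Fin d, Fintype.card (Fin (n k)) = (n k - 1) + 1 := by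
        intro k
        rw [Fintype.card_fin]
        have := hn k
        omega
      rw [Finset.sum_congr rfl (fun k _ => this k), Finset.sum_add_distrib]
      simp
    have hker : d - 1 ≤ Module.finrank 𝕜 ↥(LinearMap.ker T.mulVecLin) := by
      have hspan : Submodule.span 𝕜 (Set.range (fun (k : {k : Fin d // k ≠ 0}) =>
          (fun q : Σ k' : Fin d, Fin (n k') => kvec p i k.1 q.1 q.2)))
          ≤ LinearMap.ker T.mulVecLin := by
        rw [Submodule.span_le]
        rintro _ ⟨k, rfl⟩
        rw [SetLike.mem_coe, LinearMap.mem_ker, Matrix.mulVecLin_apply]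
        exact terraciniBlock_mulVec_kvec p i k.1 k.2
      have hrk := finrank_span_eq_card (kvec_indep p i hz)
      calc d - 1 = Fintype.card {k : Fin d // k ≠ 0} := card_ne_zero_subtype.symm
        _ = Module.finrank 𝕜 ↥(Submodule.span 𝕜 (Set.range _)) := hrk.symm
        _ ≤ Module.finrank 𝕜 ↥(LinearMap.ker T.mulVecLin) := Submodule.finrank_mono hspan
    omega

lemma rank_le_sum_blocks (p : Vecr 𝕜 d r n) :
    (terracini p).rank ≤ ∑ i, (terraciniBlock p i).rank := by
  have hcol : Set.range (terracini p)ᵀ = ⋃ i, Set.range (terraciniBlock p i)ᵀ := by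
    ext v
    constructor
    · rintro ⟨⟨i, σ⟩, rfl⟩
      exact Set.mem_iUnion.mpr ⟨i, ⟨σ, rfl⟩⟩
    · intro hv
      obtain ⟨i, σ, rfl⟩ := Set.mem_iUnion.mp hv
      exact ⟨(i, σ), rfl⟩
  rw [Matrix.rank_eq_finrank_span_cols, Matrix.col, hcol, Submodule.span_iUnion]
  calc Module.finrank 𝕜 ↥(⨆ i, Submodule.span 𝕜 (Set.range (terraciniBlock p i)ᵀ))
      ≤ ∑ i, Module.finrank 𝕜 ↥(Submodule.span 𝕜 (Set.range (terraciniBlock p i)ᵀ)) :=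
        finrank_iSup_le_sum _
    _ = ∑ i, (terraciniBlock p i).rank := by
        apply Finset.sum_congr rfl
        intro i _
        rw [Matrix.rank_eq_finrank_span_cols, Matrix.col]

lemma all_nonzero (hd : 2 ≤ d) (hn : ∀ k, 2 ≤ n k) (hr : 1 ≤ r) (p : Vecr 𝕜 d r n)
    (hbal : ∀ (i : Fin r) (k k' : Fin d), eunorm (p i k) = eunorm (p i k'))
    (N : ℕ) (hN : N = r * ((∑ k, (n k - 1)) + 1))
    (hrank : (terracini p).rank = N) : ∀ i k, p i k ≠ 0 := by
  by_contra hcon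
  push_neg at hcon
  obtain ⟨i0, k0, hik⟩ := hcon
  have hall : ∀ k, p i0 k = 0 := by
    intro k
    have h1 : eunorm (p i0 k) = 0 := by
      rw [hbal i0 k k0, hik]
      exact (eunorm_eq_zero_iff _).mpr rfl
    exact (eunorm_eq_zero_iff _).mp h1
  set S := ∑ k, (n k - 1) with hS
  have hblock0 : (terraciniBlock p i0).rank = 0 := by
    rw [terraciniBlock_eq_zero hd p i0 hall, Matrix.rank_zero]
  have hsum : ∑ i, (terraciniBlock p i).rank ≤ (r - 1) * (S + 1) := by
    rw [← Finset.sum_erase_add _ _ (Finset.mem_univ i0), hblock0, add_zero]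
    calc ∑ i ∈ Finset.univ.erase i0, (terraciniBlock p i).rank
        ≤ ∑ _i ∈ Finset.univ.erase i0, (S + 1) :=
          Finset.sum_le_sum (fun i _ => terraciniBlock_rank_le hd hn p i (hbal i))
      _ = (r - 1) * (S + 1) := by
          rw [Finset.sum_const, Finset.card_erase_of_mem (Finset.mem_univ _)]
          simp [Finset.card_univ, mul_comm]
  have hle := (rank_le_sum_blocks p).trans hsum
  rw [hrank, hN] at hle
  have : (r - 1) * (S + 1) < r * (S + 1) :=
    (Nat.mul_lt_mul_right (by omega)).mpr (by omega)
  omega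

set_option maxHeartbeats 1000000 in
lemma ker_orth (hd : 2 ≤ d) (hn : ∀ k, 2 ≤ n k) (hr : 1 ≤ r) (p : Vecr 𝕜 d r n)
    (hbal : ∀ (i : Fin r) (k k' : Fin d), eunorm (p i k) = eunorm (p i k'))
    (N : ℕ) (hN : N = r * ((∑ k, (n k - 1)) + 1))
    (hrank : (terracini p).rank = N) :
    ∀ w : ColIdx d r n → 𝕜, (terracini p).mulVec w = 0 →
      ∑ q, (starRingEnd 𝕜) (w q) * flat p q = 0 := by
  have hnz := all_nonzero hd hn hr p hbal N hN hrank
  set g : Fin r × {k : Fin d // k ≠ 0} → (ColIdx d r n → 𝕜) :=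
    fun z => kcol p z.1 z.2.1 with hg
  set K := LinearMap.ker (terracini p).mulVecLin with hK
  -- span of kernel vectors equals the kernel
  have hspan_le : Submodule.span 𝕜 (Set.range g) ≤ K := by
    rw [Submodule.span_le]
    rintro _ ⟨z, rfl⟩
    rw [SetLike.mem_coe, LinearMap.mem_ker, Matrix.mulVecLin_apply, hg]
    exact kcol_mem_ker p z.1 z.2.1 z.2.2
  have hspan_eq : Submodule.span 𝕜 (Set.range g) = K := by
    have hfr_span : Module.finrank 𝕜 ↥(Submodule.span 𝕜 (Set.range g)) = r * (d - 1) := by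
      rw [finrank_span_eq_card (kcol_indep p hnz), Fintype.card_prod, Fintype.card_fin,
        card_ne_zero_subtype]
    have hfr_ker : Module.finrank 𝕜 ↥K = r * (d - 1) := by
      have hrn := LinearMap.finrank_range_add_finrank_ker (terracini p).mulVecLin
      rw [Module.finrank_fintype_fun_eq_card] at hrn
      have hrank' : Module.finrank 𝕜 ↥(LinearMap.range (terracini p).mulVecLin) = N := hrank
      have hcard : Fintype.card (ColIdx d r n) = r * ((∑ k, (n k - 1)) + d) := by
        rw [Fintype.card_prod, Fintype.card_fin, Fintype.card_sigma]
        congr 1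
        have : ∀ k : Fin d, Fintype.card (Fin (n k)) = (n k - 1) + 1 := by
          intro k
          rw [Fintype.card_fin]
          have := hn k
          omega
        rw [Finset.sum_congr rfl (fun k _ => this k), Finset.sum_add_distrib]
        simp
      rw [hrank', hcard] at hrn
      have h3 : r * ((∑ k, (n k - 1)) + d)
          = r * ((∑ k, (n k - 1)) + 1) + r * (d - 1) := by
        rw [← Nat.mul_add]
        congr 1
        omega
      rw [h3, ← hN] at hrn
      exact Nat.add_left_cancel hrn
    exact le_antisymm hspan_le (by
      rw [← Submodule.eq_of_le_of_finrank_le hspan_le (by omega)])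
  -- generators are orthogonal to flat p
  have hgen : ∀ z : Fin r × {k : Fin d // k ≠ 0},
      ∑ q, (starRingEnd 𝕜) (g z q) * flat p q = 0 := by
    rintro ⟨i, k⟩
    rw [Fintype.sum_prod_type]
    have hin : ∀ i' : Fin r, (∑ σ : Σ k' : Fin d, Fin (n k'),
        (starRingEnd 𝕜) (g (i, k) (i', σ)) * flat p (i', σ))
        = if i' = i then ∑ σ : Σ k' : Fin d, Fin (n k'),
            (starRingEnd 𝕜) (kvec p i k.1 σ.1 σ.2) * p i σ.1 σ.2 else 0 := by
      intro i'
      by_cases h : i' = i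
      · subst h
        simp only [if_pos rfl]
        apply Finset.sum_congr rfl
        intro σ _
        rw [hg]
        simp only [kcol, if_pos rfl]
        rfl
      · simp only [if_neg h]
        apply Finset.sum_eq_zero
        intro σ _
        rw [hg]
        simp only [kcol, if_neg h, map_zero, zero_mul]
    rw [Finset.sum_congr rfl (fun i' _ => hin i'), Finset.sum_ite_eq' Finset.univ i]
    simp only [Finset.mem_univ, if_pos]
    rw [sum_sigma_univ]
    have hterm : ∀ k' : Fin d, (∑ j : Fin (n k'),
        (starRingEnd 𝕜) (kvec p i k.1 k' j) * p i k' j)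
        = (if k' = 0 then ((∑ j, ‖p i 0 j‖ ^ 2 : ℝ) : 𝕜) else 0)
          + (if k' = k.1 then -((∑ j, ‖p i k.1 j‖ ^ 2 : ℝ) : 𝕜) else 0) := by
      intro k'
      rcases eq_or_ne k' 0 with h0 | h0
      · subst h0
        rw [if_pos rfl, if_neg (Ne.symm k.2), add_zero]
        have : ∀ j, kvec p i k.1 0 j = p i 0 j := fun j => by simp [kvec]
        rw [Finset.sum_congr rfl (fun j _ => by rw [this j])]
        exact sum_conj_mul_self _
      · rcases eq_or_ne k' k.1 with hkk | hkk
        · subst hkk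
          rw [if_neg h0, if_pos rfl, zero_add]
          rw [Finset.sum_congr rfl (fun j _ => by
            rw [kvec_transport p i k.1 k.2 j, map_neg, neg_mul])]
          rw [Finset.sum_neg_distrib, sum_conj_mul_self]
        · rw [if_neg h0, if_neg hkk, add_zero]
          apply Finset.sum_eq_zero
          intro j _
          rw [kvec_other p i k.1 k' h0 hkk j, map_zero, zero_mul]
    rw [Finset.sum_congr rfl (fun k' _ => hterm k'), Finset.sum_add_distrib]
    simp only [Finset.sum_ite_eq', Finset.mem_univ, if_true]
    rw [sum_sq_eq_of_eunorm_eq (hbal i 0 k.1)]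
    ring
  -- conclude by span induction
  have hP : ∀ v, v ∈ Submodule.span 𝕜 (Set.range g) →
      ∑ q, (starRingEnd 𝕜) (v q) * flat p q = 0 := by
    intro v hv
    induction hv using Submodule.span_induction with
    | mem x hx =>
      obtain ⟨z, rfl⟩ := hx
      exact hgen z
    | zero => simp
    | add x y _ _ hx hy =>
      rw [Finset.sum_congr rfl (fun q _ => by
      rw [Pi.add_apply, map_add, add_mul] : ∀ q ∈ Finset.univ, (starRingEnd 𝕜) ((x + y) q) *
          flat p q = (starRingEnd 𝕜) (x q) * flat p q + (starRingEnd 𝕜) (y q) * flat p q)]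
      rw [Finset.sum_add_distrib, hx, hy, add_zero]
    | smul a x _ hx =>
      rw [Finset.sum_congr rfl (fun q _ => by
        rw [Pi.smul_apply, smul_eq_mul, map_mul, mul_assoc] : ∀ q ∈ Finset.univ,
          (starRingEnd 𝕜) ((a • x) q) * flat p q
            = (starRingEnd 𝕜) a * ((starRingEnd 𝕜) (x q) * flat p q))]
      rw [← Finset.mul_sum, hx, mul_zero]
  intro w hw
  have hwK : w ∈ K := by
    rw [hK, LinearMap.mem_ker, Matrix.mulVecLin_apply]
    exact hw
  rw [← hspan_eq] at hwK
  exact hP w hwK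

lemma vnorm_eq_eunorm_flat (p : Vecr 𝕜 d r n) : vnorm p = eunorm (flat p) := by
  rw [vnorm, eunorm]
  congr 1
  rw [Fintype.sum_prod_type]
  apply Finset.sum_congr rfl
  intro i _
  rw [sum_sigma_univ]
  rfl

lemma eunorm_mulVec_flat (p : Vecr 𝕜 d r n) :
    eunorm ((terracini p).mulVec (flat p)) = d * tnorm (tmap p) := by
  rw [terracini_mulVec_flat, eunorm, tnorm]
  have h1 : ∀ x : (k : Fin d) → Fin (n k), ‖(d : 𝕜) * tmap p x‖ ^ 2
      = (d:ℝ)^2 * ‖tmap p x‖ ^ 2 := by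
    intro x
    rw [norm_mul, mul_pow, RCLike.norm_natCast]
  rw [Finset.sum_congr rfl (fun x _ => h1 x), ← Finset.mul_sum,
    Real.sqrt_mul (by positivity), Real.sqrt_sq (by positivity)]

end Main

/-- the relative condition number of a (robustly `r`-identifiable)
tensor given by a nonzero norm-balanced representative with full-rank Terracini matrix
is bounded from below by `1/d`. -/
theorem relative_condition_number_lower_bound
    (hd : 2 ≤ d) (hn : ∀ k, 2 ≤ n k) (hr : 1 ≤ r)
    (p : Vecr 𝕜 d r n) (hp : p ≠ 0)
    (hbal : ∀ (i : Fin r) (k k' : Fin d), eunorm (p i k) = eunorm (p i k'))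
    (N : ℕ) (hN : N = r * ((∑ k, (n k - 1)) + 1))
    (hrank : (terracini p).rank = N) :
    (1 : ℝ) / d ≤ (nthSV (terracini p) N)⁻¹ * (tnorm (tmap p) / vnorm p) := by
  haveI : NeZero d := ⟨by omega⟩
  have hN1 : 1 ≤ N := by
    rw [hN]
    exact Nat.one_le_iff_ne_zero.mpr (Nat.mul_ne_zero (by omega) (by omega))
  have hv := ker_orth hd hn hr p hbal N hN hrank
  have hkey := key_lower_bound (terracini p) N hrank hN1 (flat p) hv
  have ht : 0 < nthSV (terracini p) N := (nthSV_facts (terracini p) N hrank hN1).1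
  rw [eunorm_mulVec_flat] at hkey
  have hflat : eunorm (flat p) = vnorm p := (vnorm_eq_eunorm_flat p).symm
  rw [hflat] at hkey
  have hvn : 0 < vnorm p := by
    rcases lt_or_eq_of_le (by rw [vnorm_eq_eunorm_flat]; exact Real.sqrt_nonneg _ :
        (0:ℝ) ≤ vnorm p) with h | h
    · exact h
    · exfalso
      apply hp
      have h1 : eunorm (flat p) = 0 := by rw [← vnorm_eq_eunorm_flat, ← h]
      have h2 := (eunorm_eq_zero_iff (flat p)).mp h1
      funext i k j
      exact congrFun h2 (i, ⟨k, j⟩)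
  have hd0 : (0:ℝ) < d := by
    have : (2:ℝ) ≤ d := by exact_mod_cast hd
    linarith
  have htn : 0 ≤ tnorm (tmap p) := Real.sqrt_nonneg _
  have hrw : (nthSV (terracini p) N)⁻¹ * (tnorm (tmap p) / vnorm p)
      = tnorm (tmap p) / (nthSV (terracini p) N * vnorm p) := by
    field_simp
  rw [hrw, div_le_div_iff₀ hd0 (by positivity)]
  nlinarith [hkey]

end TensorCond
end
end
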